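/- In the translated program T(P), for any initial goal containing no constraints of the form a_r(X̄,M), the following invariant holds in every ω_p-reachable state: if a_r(X̄,M_1)#i_1 and a_r(X̄,M_2)#i_2 are both in the CHR constraint store (same predicate a and same arguments X̄), then i_1 = i_2 and M_1 = M_2; consequently every assertion a(X̄), whether asserted positively, negatively or both, is represented by at most one a_r constraint in the store, and the number of strong prefix firings of the set/deletion-semantics rules is bounded by the number of assertions of a(X̄) and del(a(X̄)). -/
import Mathlib


namespace LA2CHR

/-- Mode indicators: positively asserted (`p`), negatively asserted (`n`), or both (`b`). -/
inductive Mode : Type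
  | p | n | b
deriving DecidableEq

/-- CHR constraints of the translated program `T(P)`: for each ground user-defined
LA atom `a`, `raw a` is the CHR constraint `a(X̄)`, `rawDel a` is `del(a(X̄))`, and
`rep a m` is the representation constraint `a_r(X̄, m)` with mode indicator `m`. -/
inductive TC (α : Type) : Type
  | raw : α → TC α
  | rawDel : α → TC α
  | rep : α → Mode → TC α
deriving DecidableEq

/-- Ground Logical Algorithms assertions: positive (`pos a` is `a`) or
negative (`del a` is `del(a)`). -/
inductive LAAtom (α : Type) : Type
  | pos : α → LAAtom α
  | del : α → LAAtom α
deriving DecidableEq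

/-- A ground instance of a Logical Algorithms rule, with the comparison antecedents
already evaluated away: a ground instance belongs to the program iff its comparisons
are true.  `posA` are the (distinct) positive user-defined ground antecedents, `negA`
the atoms of the negative (`del`) antecedents, `concl` the instantiated conclusion and
`prio` the instantiated rule priority. -/
structure Inst (α : Type) where
  prio : ℕ
  posA : Finset α
  negA : Finset α
  concl : Finset (LAAtom α)

variable {α : Type}

/-- Applicability of a ground rule instance of `P` in an LA state
(the priority condition is not included). -/
def LAApplicable (P : Set (Inst α)) (σ : Set (LAAtom α)) (ι : Inst α) : Prop :=
  ι ∈ P ∧ (∀ a ∈ ι.posA, LAAtom.pos a ∈ σ ∧ LAAtom.del a ∉ σ) ∧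
    (∀ a ∈ ι.negA, LAAtom.del a ∈ σ) ∧ ¬ ↑ι.concl ⊆ σ

/-- The `Apply` transition of Logical Algorithms: a highest-priority applicable ground
rule instance whose conclusion is not yet contained in the state fires. -/
def LAStep (P : Set (Inst α)) (σ σ' : Set (LAAtom α)) : Prop :=
  ∃ ι, LAApplicable P σ ι ∧ σ' = σ ∪ ↑ι.concl ∧
    ∀ ι', LAApplicable P σ ι' → ι.prio ≤ ι'.prio

/-- Names of the rules of the translated CHR^rp program `T(P)`: the six
set/deletion-semantics rule schemas (for all user-defined predicates at once,
instantiated per ground atom), and one propagation rule per ground LA rule instance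
(the ground collapse of the rules `r_ρ`). -/
inductive RuleTag (α : Type) : Type
  | keepPos | mergePos | newPos | keepNeg | mergeNeg | newNeg
  | inst : Inst α → RuleTag α

/-- Rule priorities of `T(P)`: the update rules have priority 1, the rules creating a
fresh representation have priority 2, and the translation of an LA rule of priority
`p` has priority `p + 2`. -/
def RuleTag.prio : RuleTag α → ℕ
  | .keepPos => 1
  | .mergePos => 1
  | .keepNeg => 1
  | .mergeNeg => 1
  | .newPos => 2
  | .newNeg => 2
  | .inst ι => ι.prio + 2

/-- CHR^rp execution states `⟨G, S, true, T⟩_n`: goal, CHR constraint store of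
identified constraints, propagation history (recording a rule together with the set of
identified constraints it fired on) and next free identifier.  As the translated
program has no built-in tell constraints, the built-in store is always `true` and is
omitted. -/
structure CState (α : Type) where
  goal : Multiset (TC α)
  store : Set (TC α × ℕ)
  hist : Set (RuleTag α × Set (TC α × ℕ))
  next : ℕ

/-- Conclusion atoms as CHR constraints. -/
def toTC : LAAtom α → TC α
  | .pos a => .raw a
  | .del a => .rawDel a

/-- `Fires P χ t H R B`: rule `t` of `T(P)` has an instance in state `χ` matching the
set `H` of identified stored head constraints, of which the ones in `R` are removed,
with instantiated body `B`.  This comprises all conditions of the ω_p `Apply`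
transition except the empty-goal, propagation-history and priority conditions. -/
inductive Fires (P : Set (Inst α)) (χ : CState α) :
    RuleTag α → Set (TC α × ℕ) → Set (TC α × ℕ) → Multiset (TC α) → Prop
  | keepPos (a : α) (m : Mode) (i j : ℕ) : m ≠ Mode.n →
      (TC.rep a m, i) ∈ χ.store → (TC.raw a, j) ∈ χ.store →
      Fires P χ .keepPos {(TC.rep a m, i), (TC.raw a, j)} {(TC.raw a, j)} 0
  | mergePos (a : α) (i j : ℕ) :
      (TC.rep a Mode.n, i) ∈ χ.store → (TC.raw a, j) ∈ χ.store →
      Fires P χ .mergePos {(TC.rep a Mode.n, i), (TC.raw a, j)}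
        {(TC.rep a Mode.n, i), (TC.raw a, j)} {TC.rep a Mode.b}
  | newPos (a : α) (j : ℕ) : (TC.raw a, j) ∈ χ.store →
      Fires P χ .newPos {(TC.raw a, j)} {(TC.raw a, j)} {TC.rep a Mode.p}
  | keepNeg (a : α) (m : Mode) (i j : ℕ) : m ≠ Mode.p →
      (TC.rep a m, i) ∈ χ.store → (TC.rawDel a, j) ∈ χ.store →
      Fires P χ .keepNeg {(TC.rep a m, i), (TC.rawDel a, j)} {(TC.rawDel a, j)} 0
  | mergeNeg (a : α) (i j : ℕ) :
      (TC.rep a Mode.p, i) ∈ χ.store → (TC.rawDel a, j) ∈ χ.store →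
      Fires P χ .mergeNeg {(TC.rep a Mode.p, i), (TC.rawDel a, j)}
        {(TC.rep a Mode.p, i), (TC.rawDel a, j)} {TC.rep a Mode.b}
  | newNeg (a : α) (j : ℕ) : (TC.rawDel a, j) ∈ χ.store →
      Fires P χ .newNeg {(TC.rawDel a, j)} {(TC.rawDel a, j)} {TC.rep a Mode.n}
  | inst (ι : Inst α) (fp fn : α → ℕ) (fm : α → Mode) : ι ∈ P →
      (∀ a ∈ ι.posA, (TC.rep a Mode.p, fp a) ∈ χ.store) →
      (∀ a ∈ ι.negA, fm a ≠ Mode.p ∧ (TC.rep a (fm a), fn a) ∈ χ.store) →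
      Fires P χ (.inst ι)
        ((fun a => (TC.rep a Mode.p, fp a)) '' ↑ι.posA ∪
          (fun a => (TC.rep a (fm a), fn a)) '' ↑ι.negA)
        ∅ (Multiset.map toTC ι.concl.val)

/-- Transition labels: `Introduce`, or `Apply` of a given rule of `T(P)`. -/
inductive Lab (α : Type) : Type
  | intro : Lab α
  | apply : RuleTag α → Lab α

variable [DecidableEq α]

/-- The transitions of the priority semantics ω_p for the translated program `T(P)`:
`Introduce` moves a constraint from the goal to the store with a fresh identifier;
`Apply` (possible only when the goal is empty) fires an instance of a rule whose
history tuple is not yet recorded and such that no fireable rule instance has a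
strictly higher priority. -/
inductive Step (P : Set (Inst α)) : CState α → Lab α → CState α → Prop
  | intro (χ : CState α) (c : TC α) : c ∈ χ.goal →
      Step P χ .intro ⟨χ.goal.erase c, insert (c, χ.next) χ.store, χ.hist, χ.next + 1⟩
  | apply (χ : CState α) (t : RuleTag α) (H R : Set (TC α × ℕ)) (B : Multiset (TC α)) :
      χ.goal = 0 → Fires P χ t H R B → (t, H) ∉ χ.hist →
      (∀ t' H' R' B', Fires P χ t' H' R' B' → (t', H') ∉ χ.hist →
        RuleTag.prio t ≤ RuleTag.prio t') →
      Step P χ (.apply t) ⟨B, χ.store \ R, insert (t, H) χ.hist, χ.next⟩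

/-- Some ω_p transition. -/
def StepAny (P : Set (Inst α)) (χ χ' : CState α) : Prop := ∃ l, Step P χ l χ'

/-- An ω_p transition that is an `Introduce` or fires a rule of priority 1 or 2. -/
def Step2 (P : Set (Inst α)) (χ χ' : CState α) : Prop :=
  ∃ l, Step P χ l χ' ∧ ∀ t, l = Lab.apply t → RuleTag.prio t ≤ 2

/-- Membership in `A = G ∪ chr(S)`. -/
def memA (χ : CState α) (c : TC α) : Prop := c ∈ χ.goal ∨ ∃ i, (c, i) ∈ χ.store

/-- The mapping from (reachable) CHR^rp execution states of `T(P)` to LA states. -/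
def chrToLa (χ : CState α) : Set (LAAtom α) :=
  {x | (∃ a, x = LAAtom.pos a ∧
          (memA χ (TC.raw a) ∨ ∃ m, m ≠ Mode.n ∧ memA χ (TC.rep a m))) ∨
       (∃ a, x = LAAtom.del a ∧
          (memA χ (TC.rawDel a) ∨ ∃ m, m ≠ Mode.p ∧ memA χ (TC.rep a m)))}

/-- Initial states `⟨G, ∅, true, ∅⟩_n` where the goal `G` contains only constraints of
the forms `a(X̄)` and `del(a(X̄))` (no `a_r` constraints). -/
def Init (χ : CState α) : Prop :=
  (∀ c ∈ χ.goal, ∃ a, c = TC.raw a ∨ c = TC.rawDel a) ∧ χ.store = ∅ ∧ χ.hist = ∅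

/-- Reachability (w.r.t. ω_p and program `T(P)`) from an initial state. -/
def Reachable (P : Set (Inst α)) (χ : CState α) : Prop :=
  ∃ χ₀, Init χ₀ ∧ Relation.ReflTransGen (StepAny P) χ₀ χ

/-- Pre-normal form: empty goal, the store contains only `a_r(X̄, M)` constraints, and
two stored representations of the same atom have the same identifier. -/
def PreNormal (χ : CState α) : Prop :=
  χ.goal = 0 ∧ (∀ c ∈ χ.store, ∃ a m, c.1 = TC.rep a m) ∧
  ∀ a m₁ m₂ i₁ i₂, (TC.rep a m₁, i₁) ∈ χ.store → (TC.rep a m₂, i₂) ∈ χ.store → i₁ = i₂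

/-- A rule instance is implied in a state `σ` if its conclusion is contained in
`chrToLa σ`. -/
def Implied (ι : Inst α) (χ : CState α) : Prop := ↑ι.concl ⊆ chrToLa χ

end LA2CHR

namespace LA2CHR

/-- Names of the six set/deletion-semantics rule schemas of `T(P)`. -/
inductive SDTag : Type
  | keepPos | mergePos | newPos | keepNeg | mergeNeg | newNeg
deriving DecidableEq

/-- Priorities of the set/deletion-semantics rules. -/
def SDTag.prio : SDTag → ℕ
  | .newPos => 2
  | .newNeg => 2
  | _ => 1

variable {α : Type}

/-- `HeadsHold χ t len a m`: the antecedents of the prefix of length `len` of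
set/deletion-semantics rule `t`, instantiated by the ground substitution determined by
`a` and (for rules with a mode variable) `m`, together with the corresponding guard
prefix, hold in state `χ`. -/
def HeadsHold (χ : CState α) : SDTag → ℕ → α → Mode → Prop
  | .keepPos, 1, a, m => ∃ i, (TC.rep a m, i) ∈ χ.store
  | .keepPos, 2, a, m => m ≠ Mode.n ∧ (∃ i, (TC.rep a m, i) ∈ χ.store) ∧
      ∃ j, (TC.raw a, j) ∈ χ.store
  | .mergePos, 1, a, m => m = Mode.n ∧ ∃ i, (TC.rep a m, i) ∈ χ.store
  | .mergePos, 2, a, m => m = Mode.n ∧ (∃ i, (TC.rep a m, i) ∈ χ.store) ∧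
      ∃ j, (TC.raw a, j) ∈ χ.store
  | .newPos, 1, a, _ => ∃ j, (TC.raw a, j) ∈ χ.store
  | .keepNeg, 1, a, m => ∃ i, (TC.rep a m, i) ∈ χ.store
  | .keepNeg, 2, a, m => m ≠ Mode.p ∧ (∃ i, (TC.rep a m, i) ∈ χ.store) ∧
      ∃ j, (TC.rawDel a, j) ∈ χ.store
  | .mergeNeg, 1, a, m => m = Mode.p ∧ ∃ i, (TC.rep a m, i) ∈ χ.store
  | .mergeNeg, 2, a, m => m = Mode.p ∧ (∃ i, (TC.rep a m, i) ∈ χ.store) ∧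
      ∃ j, (TC.rawDel a, j) ∈ χ.store
  | .newNeg, 1, a, _ => ∃ j, (TC.rawDel a, j) ∈ χ.store
  | _, _, _, _ => False

variable [DecidableEq α]

/-- Some rule instance of priority 1 is fireable in `χ` (its heads match, and its
history tuple is not in the propagation history): used to express that a state has
priority 2 or lower. -/
def Prio1Fireable (P : Set (Inst α)) (χ : CState α) : Prop :=
  ∃ t H R B, Fires P χ t H R B ∧ (t, H) ∉ χ.hist ∧ RuleTag.prio t = 1

/-- `true` for the CHR constraints that are assertions `a(X̄)` or `del(a(X̄))`. -/
def isAssert : TC α → Bool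
  | .raw _ => true
  | .rawDel _ => true
  | .rep _ _ => false

/-- The number of assertions of constraints `a(X̄)` and `del(a(X̄))` along a derivation
`f 0 → f 1 → ⋯ → f L` with transition labels `g`: the assertions in the initial goal,
plus the assertions in the body of each fired rule (after an `Apply` transition the
goal is exactly the instantiated rule body). -/
def AssertCount (f : ℕ → CState α) (g : ℕ → Lab α) (L : ℕ) : ℕ :=
  Multiset.countP (fun c => isAssert c = true) (f 0).goal +
    ∑ i ∈ Finset.range L,
      (match g i with
        | Lab.intro => 0
        | Lab.apply _ => Multiset.countP (fun c => isAssert c = true) (f (i + 1)).goal)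

end LA2CHR

namespace LA2CHR

variable {α : Type}

/-- `true` for representation constraints. -/
def isRep : TC α → Bool
  | .rep _ _ => true
  | _ => false

/-- The atom of a CHR constraint. -/
def atomOf : TC α → α
  | .raw a => a
  | .rawDel a => a
  | .rep a _ => a

/-- The invariant maintained by all ω_p transitions of `T(P)` from an initial state. -/
structure Inv (χ : CState α) : Prop where
  ids : ∀ x ∈ χ.store, x.2 < χ.next
  uniq : ∀ a m₁ m₂ i₁ i₂, (TC.rep a m₁, i₁) ∈ χ.store → (TC.rep a m₂, i₂) ∈ χ.store →
    i₁ = i₂ ∧ m₁ = m₂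
  goalRep : Multiset.countP (fun c => isRep c = true) χ.goal ≤ 1
  goalStore : ∀ a m, TC.rep a m ∈ χ.goal → ∀ m' i, (TC.rep a m', i) ∉ χ.store
  histSD : ∀ t H, (t, H) ∈ χ.hist → (∀ ι, t ≠ RuleTag.inst ι) →
    ∃ x ∈ H, x ∉ χ.store ∧ x.2 < χ.next

lemma Inv.step [DecidableEq α] {P : Set (Inst α)} {χ χ' : CState α} {l : Lab α}
    (hI : Inv χ) (h : Step P χ l χ') : Inv χ' := by
  cases h with
  | intro c hc =>
    refine ⟨?_, ?_, ?_, ?_, ?_⟩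
    · rintro x hx
      rcases hx with hx | hx
      · simp [hx]
      · exact Nat.lt_succ_of_lt (hI.ids x hx)
    · intro a m₁ m₂ i₁ i₂ h1 h2
      rcases h1 with h1 | h1
      · rcases h2 with h2 | h2
        · obtain ⟨e1, e2⟩ := Prod.mk.injEq .. ▸ h1
          obtain ⟨e3, e4⟩ := Prod.mk.injEq .. ▸ h2
          cases e1; cases e3
          exact ⟨e2.trans e4.symm, rfl⟩
        · obtain ⟨e1, e2⟩ := Prod.mk.injEq .. ▸ h1
          exact absurd h2 (hI.goalStore a m₁ (e1 ▸ hc) m₂ i₂)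
      · rcases h2 with h2 | h2
        · obtain ⟨e1, e2⟩ := Prod.mk.injEq .. ▸ h2
          exact absurd h1 (hI.goalStore a m₂ (e1 ▸ hc) m₁ i₁)
        · exact hI.uniq a m₁ m₂ i₁ i₂ h1 h2
    · exact le_trans (Multiset.countP_le_of_le _ (Multiset.erase_le c _)) hI.goalRep
    · intro a m hm m' i hmem
      have hmg := Multiset.mem_of_mem_erase hm
      rcases hmem with hmem | hmem
      · obtain ⟨e1, e2⟩ := Prod.mk.injEq .. ▸ hmem
        subst e1
        have hcnt := hI.goalRep
        rw [← Multiset.cons_erase hc, Multiset.countP_cons,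
          if_pos (show isRep (TC.rep a m') = true from rfl)] at hcnt
        have hpos : 0 < Multiset.countP (fun c => isRep c = true)
            (χ.goal.erase (TC.rep a m')) :=
          Multiset.countP_pos.mpr ⟨_, hm, rfl⟩
        omega
      · exact hI.goalStore a m hmg m' i hmem
    · intro t H ht hni
      obtain ⟨x, hxH, hxs, hxn⟩ := hI.histSD t H ht hni
      refine ⟨x, hxH, ?_, Nat.lt_succ_of_lt hxn⟩
      rintro (hx | hx)
      · rw [hx] at hxn; exact lt_irrefl _ hxn
      · exact hxs hx
  | apply t H R B hg hF hh hpr =>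
    have huniq : ∀ a m₁ m₂ i₁ i₂, (TC.rep a m₁, i₁) ∈ χ.store \ R →
        (TC.rep a m₂, i₂) ∈ χ.store \ R → i₁ = i₂ ∧ m₁ = m₂ :=
      fun a m₁ m₂ i₁ i₂ h1 h2 => hI.uniq a m₁ m₂ i₁ i₂ h1.1 h2.1
    -- no history entry for a set/deletion rule whose heads are all in the store
    have hfresh : ∀ (t₀ : RuleTag α) (H₀ : Set (TC α × ℕ)), (∀ ι, t₀ ≠ RuleTag.inst ι) →
        H₀ ⊆ χ.store → (t₀, H₀) ∉ χ.hist := by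
      intro t₀ H₀ hni hsub hmem
      obtain ⟨x, hxH, hxs, _⟩ := hI.histSD t₀ H₀ hmem hni
      exact hxs (hsub hxH)
    refine ⟨fun x hx => hI.ids x hx.1, huniq, ?_, ?_, ?_⟩
    · cases hF with
      | keepPos a m i j hmn h1 h2 => simp
      | mergePos a i j h1 h2 => exact le_trans (Multiset.countP_le_card _ _) (by simp)
      | newPos a j h1 => exact le_trans (Multiset.countP_le_card _ _) (by simp)
      | keepNeg a m i j hmn h1 h2 => simp
      | mergeNeg a i j h1 h2 => exact le_trans (Multiset.countP_le_card _ _) (by simp)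
      | newNeg a j h1 => exact le_trans (Multiset.countP_le_card _ _) (by simp)
      | inst ι fp fn fm hP hpos hneg =>
        rw [Multiset.countP_eq_zero.mpr]
        · exact Nat.zero_le 1
        · intro c hcm
          obtain ⟨y, _, rfl⟩ := Multiset.mem_map.mp hcm
          cases y <;> simp [toTC, isRep]
    · cases hF with
      | keepPos a m i j hmn h1 h2 => intro a' m' hm'; simp at hm'
      | mergePos a i j h1 h2 =>
        intro a' m' hm' m'' i' hmem
        simp only [Multiset.mem_singleton] at hm'
        cases hm'
        obtain ⟨rfl, rfl⟩ := hI.uniq a Mode.n m'' i i' h1 hmem.1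
        exact hmem.2 (Or.inl rfl)
      | newPos a j h1 =>
        intro a' m' hm' m'' i' hmem
        simp only [Multiset.mem_singleton] at hm'
        cases hm'
        have hs' : (TC.rep a m'', i') ∈ χ.store := hmem.1
        by_cases hmn : m'' = Mode.n
        · subst hmn
          have hF' := Fires.mergePos (P := P) (χ := χ) a i' j hs' h1
          have := hpr _ _ _ _ hF' (hfresh _ _ (by intro ι h; cases h) (by
            rintro x (rfl | rfl)
            exacts [hs', h1]))
          simp [RuleTag.prio] at this
        · have hF' := Fires.keepPos (P := P) (χ := χ) a m'' i' j hmn hs' h1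
          have := hpr _ _ _ _ hF' (hfresh _ _ (by intro ι h; cases h) (by
            rintro x (rfl | rfl)
            exacts [hs', h1]))
          simp [RuleTag.prio] at this
      | keepNeg a m i j hmn h1 h2 => intro a' m' hm'; simp at hm'
      | mergeNeg a i j h1 h2 =>
        intro a' m' hm' m'' i' hmem
        simp only [Multiset.mem_singleton] at hm'
        cases hm'
        obtain ⟨rfl, rfl⟩ := hI.uniq a Mode.p m'' i i' h1 hmem.1
        exact hmem.2 (Or.inl rfl)
      | newNeg a j h1 =>
        intro a' m' hm' m'' i' hmem
        simp only [Multiset.mem_singleton] at hm'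
        cases hm'
        have hs' : (TC.rep a m'', i') ∈ χ.store := hmem.1
        by_cases hmn : m'' = Mode.p
        · subst hmn
          have hF' := Fires.mergeNeg (P := P) (χ := χ) a i' j hs' h1
          have := hpr _ _ _ _ hF' (hfresh _ _ (by intro ι h; cases h) (by
            rintro x (rfl | rfl)
            exacts [hs', h1]))
          simp [RuleTag.prio] at this
        · have hF' := Fires.keepNeg (P := P) (χ := χ) a m'' i' j hmn hs' h1
          have := hpr _ _ _ _ hF' (hfresh _ _ (by intro ι h; cases h) (by
            rintro x (rfl | rfl)
            exacts [hs', h1]))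
          simp [RuleTag.prio] at this
      | inst ι fp fn fm hP hpos hneg =>
        intro a' m' hm'
        obtain ⟨y, _, hy⟩ := Multiset.mem_map.mp hm'
        cases y <;> simp [toTC] at hy
    · intro t₀ H₀ ht₀ hni
      rcases ht₀ with ht₀ | ht₀
      · obtain ⟨e1, e2⟩ := Prod.mk.injEq .. ▸ ht₀
        subst e1; subst e2
        cases hF with
        | keepPos a m i j hmn h1 h2 =>
          exact ⟨(TC.raw a, j), Or.inr rfl, fun hx => hx.2 rfl, hI.ids _ h2⟩
        | mergePos a i j h1 h2 =>
          exact ⟨(TC.raw a, j), Or.inr rfl, fun hx => hx.2 (Or.inr rfl), hI.ids _ h2⟩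
        | newPos a j h1 =>
          exact ⟨(TC.raw a, j), rfl, fun hx => hx.2 rfl, hI.ids _ h1⟩
        | keepNeg a m i j hmn h1 h2 =>
          exact ⟨(TC.rawDel a, j), Or.inr rfl, fun hx => hx.2 rfl, hI.ids _ h2⟩
        | mergeNeg a i j h1 h2 =>
          exact ⟨(TC.rawDel a, j), Or.inr rfl, fun hx => hx.2 (Or.inr rfl), hI.ids _ h2⟩
        | newNeg a j h1 =>
          exact ⟨(TC.rawDel a, j), rfl, fun hx => hx.2 rfl, hI.ids _ h1⟩
        | inst ι fp fn fm hP hpos hneg => exact absurd rfl (hni ι)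
      · obtain ⟨x, hxH, hxs, hxn⟩ := hI.histSD t₀ H₀ ht₀ hni
        exact ⟨x, hxH, fun hx => hxs hx.1, hxn⟩

lemma inv_init {χ : CState α} (h : Init χ) : Inv χ := by
  obtain ⟨hg, hs, hh⟩ := h
  refine ⟨?_, ?_, ?_, ?_, ?_⟩
  · intro x hx; rw [hs] at hx; exact absurd hx (Set.notMem_empty x)
  · intro a m₁ m₂ i₁ i₂ h1 h2; rw [hs] at h1; exact absurd h1 (Set.notMem_empty _)
  · rw [Multiset.countP_eq_zero.mpr]
    · exact Nat.zero_le 1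
    · intro c hc
      obtain ⟨a, rfl | rfl⟩ := hg c hc <;> simp [isRep]
  · intro a m hm m' i hmem; rw [hs] at hmem; exact Set.notMem_empty _ hmem
  · intro t H ht _; rw [hh] at ht; exact absurd ht (Set.notMem_empty _)

lemma inv_reachable [DecidableEq α] {P : Set (Inst α)} {χ : CState α}
    (h : Reachable P χ) : Inv χ := by
  obtain ⟨χ₀, h0, hsteps⟩ := h
  induction hsteps with
  | refl => exact inv_init h0
  | tail _ hs ih => obtain ⟨l, hl⟩ := hs; exact ih.step hl

end LA2CHR

namespace LA2CHR

variable {α : Type} [DecidableEq α]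

/-- The atoms of the assertion constraints of a multiset of CHR constraints. -/
def aAtoms (s : Multiset (TC α)) : Finset α :=
  (Multiset.map atomOf (s.filter (fun c => isAssert c = true))).toFinset

lemma mem_aAtoms {s : Multiset (TC α)} {c : TC α} (hc : c ∈ s)
    (h : isAssert c = true) : atomOf c ∈ aAtoms s := by
  simp only [aAtoms, Multiset.mem_toFinset, Multiset.mem_map]
  exact ⟨c, Multiset.mem_filter.mpr ⟨hc, h⟩, rfl⟩

lemma aAtoms_card (s : Multiset (TC α)) :
    (aAtoms s).card ≤ Multiset.countP (fun c => isAssert c = true) s := by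
  calc (aAtoms s).card
      ≤ Multiset.card (Multiset.map atomOf (s.filter (fun c => isAssert c = true))) :=
        Multiset.toFinset_card_le _
    _ = Multiset.card (s.filter (fun c => isAssert c = true)) := Multiset.card_map _ _
    _ = _ := (Multiset.countP_eq_card_filter _ _).symm

/-- The atoms asserted along the first `n` steps of a derivation. -/
def AFin (f : ℕ → CState α) (g : ℕ → Lab α) (n : ℕ) : Finset α :=
  aAtoms (f 0).goal ∪ (Finset.range n).biUnion (fun i =>
    match g i with
    | Lab.intro => ∅
    | Lab.apply _ => aAtoms (f (i + 1)).goal)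

lemma AFin_mono (f : ℕ → CState α) (g : ℕ → Lab α) {m n : ℕ} (h : m ≤ n) :
    AFin f g m ⊆ AFin f g n :=
  Finset.union_subset_union subset_rfl
    (Finset.biUnion_subset_biUnion_of_subset_left _ (Finset.range_subset_range.mpr h))

lemma subset_AFin_succ (f : ℕ → CState α) (g : ℕ → Lab α) (j : ℕ) (t : RuleTag α)
    (h : g j = Lab.apply t) : aAtoms (f (j + 1)).goal ⊆ AFin f g (j + 1) := by
  intro x hx
  refine Finset.mem_union_right _ (Finset.mem_biUnion.mpr
    ⟨j, Finset.self_mem_range_succ j, ?_⟩)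
  rw [h]
  exact hx

lemma AFin_card (f : ℕ → CState α) (g : ℕ → Lab α) (L : ℕ) :
    (AFin f g L).card ≤ AssertCount f g L := by
  refine le_trans (Finset.card_union_le _ _) (Nat.add_le_add (aAtoms_card _) ?_)
  refine le_trans Finset.card_biUnion_le (Finset.sum_le_sum ?_)
  intro i _
  cases hg : g i <;> simp only [hg]
  · exact Nat.le_refl 0
  · exact aAtoms_card _

lemma afin_inv {P : Set (Inst α)} {f : ℕ → CState α} {g : ℕ → Lab α} {L : ℕ}
    (h0 : Init (f 0)) (hs : ∀ i < L, Step P (f i) (g i) (f (i + 1))) :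
    ∀ j, j ≤ L → (∀ c ∈ (f j).goal, atomOf c ∈ AFin f g j) ∧
      (∀ x ∈ (f j).store, atomOf x.1 ∈ AFin f g j) := by
  intro j
  induction j with
  | zero =>
    intro _
    refine ⟨?_, ?_⟩
    · intro c hc
      obtain ⟨a, rfl | rfl⟩ := h0.1 c hc <;>
        exact Finset.mem_union_left _ (mem_aAtoms hc rfl)
    · intro x hx
      rw [h0.2.1] at hx
      exact absurd hx (Set.notMem_empty x)
  | succ j ih =>
    intro hj
    obtain ⟨ihg, ihs⟩ := ih (by omega)
    have hmono : AFin f g j ⊆ AFin f g (j + 1) := AFin_mono f g (Nat.le_succ j)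
    have hst := hs j (by omega)
    generalize hgj : g j = l0 at hst
    generalize hE : f (j + 1) = χ'' at hst
    cases hst with
    | intro c hc =>
      refine ⟨?_, ?_⟩
      · intro d hd
        exact hmono (ihg d (Multiset.mem_of_mem_erase hd))
      · intro x hx
        rcases hx with rfl | hx
        · exact hmono (ihg c hc)
        · exact hmono (ihs x hx)
    | apply t H R B hgoal hF hh hpr =>
      have hsubB : ∀ c ∈ B, atomOf c ∈ AFin f g (j + 1) := by
        cases hF with
        | keepPos a m i j' hmn h1 h2 => intro c hc; simp at hc
        | mergePos a i j' h1 h2 =>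
          intro c hc
          rw [Multiset.mem_singleton] at hc
          subst hc
          exact hmono (ihs _ h2)
        | newPos a j' h1 =>
          intro c hc
          rw [Multiset.mem_singleton] at hc
          subst hc
          exact hmono (ihs _ h1)
        | keepNeg a m i j' hmn h1 h2 => intro c hc; simp at hc
        | mergeNeg a i j' h1 h2 =>
          intro c hc
          rw [Multiset.mem_singleton] at hc
          subst hc
          exact hmono (ihs _ h2)
        | newNeg a j' h1 =>
          intro c hc
          rw [Multiset.mem_singleton] at hc
          subst hc
          exact hmono (ihs _ h1)
        | inst ι fp fn fm hP hpos hneg =>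
          intro c hc
          have hgl : (f (j + 1)).goal = Multiset.map toTC ι.concl.val := by rw [hE]
          refine subset_AFin_succ f g j _ hgj ?_
          rw [hgl]
          obtain ⟨y, hy, rfl⟩ := Multiset.mem_map.mp hc
          exact mem_aAtoms hc (by cases y <;> rfl)
      refine ⟨?_, ?_⟩
      · intro d hd
        exact hsubB d hd
      · intro x hx
        exact hmono (ihs x hx.1)

instance : Fintype Mode :=
  ⟨{Mode.p, Mode.n, Mode.b}, fun x => by cases x <;> decide⟩

instance : Fintype SDTag :=
  ⟨{SDTag.keepPos, SDTag.mergePos, SDTag.newPos, SDTag.keepNeg, SDTag.mergeNeg,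
    SDTag.newNeg}, fun x => by cases x <;> decide⟩

end LA2CHR


open LA2CHR in
/-- In the translated program `T(P)`, for any initial goal containing no `a_r`
constraints, in every ω_p-reachable state two stored constraints `a_r(X̄, M₁)#i₁` and
`a_r(X̄, M₂)#i₂` with the same predicate and arguments satisfy `i₁ = i₂` and
`M₁ = M₂` — every assertion is represented by at most one `a_r` constraint in the
store.  Consequently, along any ω_p derivation from an initial state, the number of
strong prefix firings of the set/deletion-semantics rules (prefix instances whose
antecedents and guard prefix hold in some state of the derivation whose priority is
lower than or equal to the rule's priority) is bounded by (a constant times) the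
number of assertions of constraints `a(X̄)` and `del(a(X̄))`. -/
theorem representation_unique_and_setdel_prefix_firings_bounded
    {α : Type} [DecidableEq α] (P : Set (Inst α)) :
    (∀ χ : CState α, Reachable P χ →
      ∀ a m₁ m₂ i₁ i₂, (TC.rep a m₁, i₁) ∈ χ.store → (TC.rep a m₂, i₂) ∈ χ.store →
        i₁ = i₂ ∧ m₁ = m₂) ∧
    ∃ C : ℕ, ∀ (L : ℕ) (f : ℕ → CState α) (g : ℕ → Lab α)
      (SPF : Finset (SDTag × ℕ × α × Mode)),
      Init (f 0) →
      (∀ i < L, Step P (f i) (g i) (f (i + 1))) →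
      (∀ s ∈ SPF, 1 ≤ s.2.1 ∧ s.2.1 ≤ 2 ∧
        ∃ j ≤ L, HeadsHold (f j) s.1 s.2.1 s.2.2.1 s.2.2.2 ∧
          (SDTag.prio s.1 = 2 → ¬ Prio1Fireable P (f j))) →
      SPF.card ≤ C * AssertCount f g L := by
  constructor
  · intro χ hχ a m₁ m₂ i₁ i₂ h1 h2
    exact (inv_reachable hχ).uniq a m₁ m₂ i₁ i₂ h1 h2
  · refine ⟨36, ?_⟩
    intro L f g SPF h0 hs hSPF
    have hsub : SPF ⊆ (Finset.univ : Finset SDTag) ×ˢ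
        ((Finset.Icc 1 2 : Finset ℕ) ×ˢ (AFin f g L ×ˢ (Finset.univ : Finset Mode))) := by
      intro s hsS
      obtain ⟨t, len, a, m⟩ := s
      obtain ⟨h1, h2, j, hj, hH, -⟩ := hSPF _ hsS
      simp only [Finset.mem_product, Finset.mem_Icc, Finset.mem_univ, true_and, and_true]
      refine ⟨⟨h1, h2⟩, ?_⟩
      have hstore := (afin_inv h0 hs j hj).2
      apply AFin_mono f g hj
      simp only at h1 h2 hH
      interval_cases len <;> cases t <;> simp only [HeadsHold] at hH <;>
        first
          | exact hH.elim
          | (obtain ⟨i, hi⟩ := hH; exact hstore _ hi)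
          | (obtain ⟨-, i, hi⟩ := hH; exact hstore _ hi)
          | (obtain ⟨-, ⟨i, hi⟩, -⟩ := hH; exact hstore _ hi)
    have hcard := Finset.card_le_card hsub
    rw [Finset.card_product, Finset.card_product, Finset.card_product] at hcard
    have c1 : (Finset.univ : Finset SDTag).card = 6 := rfl
    have c2 : (Finset.Icc 1 2 : Finset ℕ).card = 2 := rfl
    have c3 : (Finset.univ : Finset Mode).card = 3 := rfl
    rw [c1, c2, c3] at hcard
    calc SPF.card ≤ 6 * (2 * ((AFin f g L).card * 3)) := hcard
      _ = 36 * (AFin f g L).card := by ring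
      _ ≤ 36 * AssertCount f g L := Nat.mul_le_mul_left 36 (AFin_card f g L)
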